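/- Let A₄ be the free abelian group on generators α₁, α₂, α₃, β, let B = A₄/⟨β²α₁⁻¹α₂⁻¹α₃⁻¹⟩, and let B_d ⊂ B be the subgroup generated by α₁α₃⁻¹ and α₂α₃⁻¹. Then ℂ[B]/(α₁α₂α₃ − 1) is isomorphic as a ℂ[B_d]-module to the free module of rank 6 with basis 1, α₁, α₁α₂, β, α₁β, α₁α₂β. -/

import Mathlib

noncomputable section

/-- The BCC lattice group B = A₄ / ⟨β²α₁⁻¹α₂⁻¹α₃⁻¹⟩, written multiplicatively. -/
abbrev BCCGroup : Type :=
  Multiplicative ((ℤ × ℤ × ℤ × ℤ) ⧸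
    AddSubgroup.closure {((-1 : ℤ), (-1 : ℤ), (-1 : ℤ), (2 : ℤ))})

/-- The images in B of the generators α₁, α₂, α₃, β of A₄. -/
def bccGen (j : Fin 4) : BCCGroup :=
  Multiplicative.ofAdd (QuotientAddGroup.mk
    (match j with
      | 0 => ((1 : ℤ), (0 : ℤ), (0 : ℤ), (0 : ℤ))
      | 1 => ((0 : ℤ), (1 : ℤ), (0 : ℤ), (0 : ℤ))
      | 2 => ((0 : ℤ), (0 : ℤ), (1 : ℤ), (0 : ℤ))
      | 3 => ((0 : ℤ), (0 : ℤ), (0 : ℤ), (1 : ℤ))))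

/-- The subgroup B_d = ⟨α₁α₃⁻¹, α₂α₃⁻¹⟩ of B. -/
def BCCd : Subgroup BCCGroup :=
  Subgroup.closure {bccGen 0 * (bccGen 2)⁻¹, bccGen 1 * (bccGen 2)⁻¹}

/-- The quotient ring ℂ[B]/(α₁α₂α₃ − 1). -/
abbrev RBCC : Type :=
  MonoidAlgebra ℂ BCCGroup ⧸
    Ideal.span {(MonoidAlgebra.of ℂ BCCGroup) (bccGen 0 * bccGen 1 * bccGen 2) - 1}

/-- ℂ[B_d] → ℂ[B] → ℂ[B]/(α₁α₂α₃ − 1). -/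
def φBCC : MonoidAlgebra ℂ BCCd →+* RBCC :=
  (Ideal.Quotient.mk _).comp (MonoidAlgebra.mapDomainRingHom ℂ BCCd.subtype)

/-- The six basis elements 1, α₁, α₁α₂, β, α₁β, α₁α₂β in the quotient ring. -/
def bccBasis (i : Fin 6) : RBCC :=
  Ideal.Quotient.mk _ ((MonoidAlgebra.of ℂ BCCGroup)
    (match i with
      | 0 => 1
      | 1 => bccGen 0
      | 2 => bccGen 0 * bccGen 1
      | 3 => bccGen 3
      | 4 => bccGen 0 * bccGen 3
      | 5 => bccGen 0 * bccGen 1 * bccGen 3))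

namespace BCCProof

abbrev H4 : AddSubgroup (ℤ × ℤ × ℤ × ℤ) :=
  AddSubgroup.closure {((-1 : ℤ), (-1 : ℤ), (-1 : ℤ), (2 : ℤ))}

def f4 : (ℤ × ℤ × ℤ × ℤ) →+ (ℤ × ℤ × ℤ) :=
  AddMonoidHom.mk'
    (fun p => (p.1 + p.2.2.1 + p.2.2.2, p.2.1 - p.2.2.1,
      -2*p.1 - 2*p.2.1 - 2*p.2.2.1 - 3*p.2.2.2))
    (by
      rintro ⟨a, b, c, d⟩ ⟨a', b', c', d'⟩
      simp only [Prod.mk_add_mk, Prod.mk.injEq]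
      refine ⟨by ring, by ring, by ring⟩)

def s4 : (ℤ × ℤ × ℤ) →+ (ℤ × ℤ × ℤ × ℤ) :=
  AddMonoidHom.mk'
    (fun p => (2*p.1 + p.2.1 + p.2.2, -p.1, -p.1 - p.2.1, -p.2.2))
    (by
      rintro ⟨m, n, k⟩ ⟨m', n', k'⟩
      simp only [Prod.mk_add_mk, Prod.mk.injEq]
      refine ⟨by ring, by ring, by ring, by ring⟩)

lemma hker : ∀ x ∈ H4, f4 x = 0 := by
  intro x hx
  refine AddSubgroup.closure_induction ?_ ?_ ?_ ?_ hx
  · rintro y rfl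
    decide
  · simp
  · intro y z _ _ hy hz; simp [hy, hz]
  · intro y _ hy; simp [hy]

def eQ : ((ℤ × ℤ × ℤ × ℤ) ⧸ H4) ≃+ (ℤ × ℤ × ℤ) where
  toFun := QuotientAddGroup.lift H4 f4 hker
  invFun := fun p => QuotientAddGroup.mk (s4 p)
  left_inv := by
    intro x
    refine QuotientAddGroup.induction_on x ?_
    rintro ⟨a, b, c, d⟩
    show QuotientAddGroup.mk (s4 (f4 (a,b,c,d))) = QuotientAddGroup.mk _
    rw [QuotientAddGroup.eq_iff_sub_mem]
    rw [AddSubgroup.mem_closure_singleton]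
    refine ⟨a+b+c+d, ?_⟩
    simp only [f4, s4, AddMonoidHom.mk'_apply, Prod.smul_mk, smul_eq_mul,
      Prod.mk_sub_mk, Prod.mk.injEq]
    refine ⟨by ring, by ring, by ring, by ring⟩
  right_inv := by
    rintro ⟨m, n, k⟩
    show f4 (s4 (m,n,k)) = _
    simp only [f4, s4, AddMonoidHom.mk'_apply, Prod.mk.injEq]
    refine ⟨by ring, by ring, by ring⟩
  map_add' := by
    intro x y
    exact map_add (QuotientAddGroup.lift H4 f4 hker) x y

def Φ : BCCGroup ≃* Multiplicative (ℤ × ℤ × ℤ) := AddEquiv.toMultiplicative eQ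

lemma phi_gen0 : Φ (bccGen 0) = Multiplicative.ofAdd ((1 : ℤ), (0:ℤ), (-2:ℤ)) := rfl
lemma phi_gen1 : Φ (bccGen 1) = Multiplicative.ofAdd ((0 : ℤ), (1:ℤ), (-2:ℤ)) := rfl
lemma phi_gen2 : Φ (bccGen 2) = Multiplicative.ofAdd ((1 : ℤ), (-1:ℤ), (-2:ℤ)) := rfl
lemma phi_gen3 : Φ (bccGen 3) = Multiplicative.ofAdd ((1 : ℤ), (0:ℤ), (-3:ℤ)) := rfl


/-- the distinguished group element α₁α₂α₃ (= β²). -/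
def gE : BCCGroup := bccGen 0 * bccGen 1 * bccGen 2

/-- the six basis group elements. -/
def bg (i : Fin 6) : BCCGroup :=
  match i with
  | 0 => 1
  | 1 => bccGen 0
  | 2 => bccGen 0 * bccGen 1
  | 3 => bccGen 3
  | 4 => bccGen 0 * bccGen 3
  | 5 => bccGen 0 * bccGen 1 * bccGen 3

/-- coordinates of bg under Φ. -/
def cb (i : Fin 6) : ℤ × ℤ × ℤ :=
  match i with
  | 0 => (0, 0, 0)
  | 1 => (1, 0, -2)
  | 2 => (1, 1, -4)
  | 3 => (1, 0, -3)
  | 4 => (2, 0, -5)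
  | 5 => (2, 1, -7)

lemma phi_bg (i : Fin 6) : Φ (bg i) = Multiplicative.ofAdd (cb i) := by
  fin_cases i <;> rfl

lemma phi_gE : Φ gE = Multiplicative.ofAdd ((2:ℤ), (0:ℤ), (-6:ℤ)) := rfl

/-- section ℤ² → BCCd. -/
def χ (p : ℤ × ℤ) : BCCGroup :=
  (bccGen 0 * (bccGen 2)⁻¹) ^ (2*p.1 + p.2) * (bccGen 1 * (bccGen 2)⁻¹) ^ (-p.1)

lemma χ_mem (p : ℤ × ℤ) : χ p ∈ BCCd := by
  refine mul_mem (zpow_mem (Subgroup.subset_closure ?_) _)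
    (zpow_mem (Subgroup.subset_closure ?_) _)
  · exact Set.mem_insert _ _
  · exact Set.mem_insert_of_mem _ rfl

lemma phi_γ1 : Φ (bccGen 0 * (bccGen 2)⁻¹) = Multiplicative.ofAdd ((0:ℤ),(1:ℤ),(0:ℤ)) := rfl
lemma phi_γ2 : Φ (bccGen 1 * (bccGen 2)⁻¹) = Multiplicative.ofAdd ((-1:ℤ),(2:ℤ),(0:ℤ)) := rfl

lemma phi_χ (p : ℤ × ℤ) : Φ (χ p) = Multiplicative.ofAdd (p.1, p.2, 0) := by
  rcases p with ⟨a, b⟩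
  rw [χ, map_mul, map_zpow, map_zpow, phi_γ1, phi_γ2]
  rw [← ofAdd_zsmul, ← ofAdd_zsmul, ← ofAdd_add]
  congr 1
  simp only [Prod.smul_mk, smul_eq_mul, Prod.mk_add_mk, Prod.mk.injEq]
  refine ⟨by ring, by ring, by ring⟩

lemma mem_d_third {d : BCCGroup} (hd : d ∈ BCCd) :
    (Multiplicative.toAdd (Φ d)).2.2 = 0 := by
  refine Subgroup.closure_induction ?_ ?_ ?_ ?_ hd
  · rintro y (rfl | rfl)
    · rfl
    · rfl
  · rfl
  · intro y z _ _ hy hz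
    rw [map_mul, toAdd_mul, Prod.snd_add, Prod.snd_add, hy, hz, add_zero]
  · intro y _ hy
    rw [map_inv, toAdd_inv, Prod.snd_neg, Prod.snd_neg, hy, neg_zero]

lemma χ_eq_self {d : BCCGroup} (hd : d ∈ BCCd) :
    χ ((Multiplicative.toAdd (Φ d)).1, (Multiplicative.toAdd (Φ d)).2.1) = d := by
  apply Φ.injective
  rw [phi_χ]
  have h3 := mem_d_third hd
  apply Multiplicative.toAdd.injective
  simp only [toAdd_ofAdd]
  exact Prod.ext rfl (Prod.ext rfl h3.symm)

/-! ### arithmetic decomposition -/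

def idxr (r : ℤ) : Fin 6 :=
  if r = 0 then 0 else if r = 1 then 4 else if r = 2 then 2
  else if r = 3 then 3 else if r = 4 then 1 else 5

def idx (k : ℤ) : Fin 6 := idxr (k % 6)

lemma cb_idx_mod (k : ℤ) : (cb (idx k)).2.2 % 6 = k % 6 := by
  have h : k % 6 = 0 ∨ k % 6 = 1 ∨ k % 6 = 2 ∨ k % 6 = 3 ∨ k % 6 = 4 ∨ k % 6 = 5 := by omega
  rcases h with h | h | h | h | h | h <;> rw [idx, h] <;> decide

/-- index component of decomposition of b -/
def iE (b : BCCGroup) : Fin 6 := idx (Multiplicative.toAdd (Φ b)).2.2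

/-- power-of-g component -/
def qE (b : BCCGroup) : ℤ :=
  ((cb (iE b)).2.2 - (Multiplicative.toAdd (Φ b)).2.2) / 6

/-- B_d component, as ℤ²-coordinates -/
def dE (b : BCCGroup) : ℤ × ℤ :=
  ((Multiplicative.toAdd (Φ b)).1 - (cb (iE b)).1 - 2 * qE b,
   (Multiplicative.toAdd (Φ b)).2.1 - (cb (iE b)).2.1)

/-- B_d component as an element of the subgroup -/
def ddE (b : BCCGroup) : BCCd := ⟨χ (dE b), χ_mem _⟩

lemma arith_decomp (p : ℤ × ℤ × ℤ) :
    ((p.1 - (cb (idx p.2.2)).1 - 2 * (((cb (idx p.2.2)).2.2 - p.2.2)/6),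
      p.2.1 - (cb (idx p.2.2)).2.1, 0) : ℤ × ℤ × ℤ)
      + (((cb (idx p.2.2)).2.2 - p.2.2)/6) • ((2:ℤ), (0:ℤ), (-6:ℤ)) + cb (idx p.2.2) = p := by
  obtain ⟨m, n, k⟩ := p
  have hmod := cb_idx_mod k
  rcases hw : cb (idx k) with ⟨a, bb, c⟩
  simp only [hw] at hmod
  simp only [hw, Prod.smul_mk, smul_eq_mul, Prod.mk_add_mk, Prod.mk.injEq]
  refine ⟨by ring, by ring, by omega⟩

lemma decomp (b : BCCGroup) : b = χ (dE b) * gE ^ qE b * bg (iE b) := by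
  apply Φ.injective
  rw [map_mul, map_mul, map_zpow, phi_χ, phi_gE, phi_bg, ← ofAdd_zsmul, ← ofAdd_add, ← ofAdd_add]
  conv_lhs => rw [← ofAdd_toAdd (Φ b)]
  congr 1
  simp only [dE, qE, iE]
  exact (arith_decomp (Multiplicative.toAdd (Φ b))).symm


lemma toAdd_phi_mul (x y : BCCGroup) :
    Multiplicative.toAdd (Φ (x * y)) =
      Multiplicative.toAdd (Φ x) + Multiplicative.toAdd (Φ y) := by
  rw [map_mul, toAdd_mul]

lemma iE_mul_g (b : BCCGroup) : iE (b * gE) = iE b := by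
  rw [iE, iE, toAdd_phi_mul]
  show idx ((Multiplicative.toAdd (Φ b)).2.2 + (-6)) = _
  rw [idx, idx]
  congr 1
  omega

lemma qE_mul_g (b : BCCGroup) : qE (b * gE) = qE b + 1 := by
  have hmod := cb_idx_mod (Multiplicative.toAdd (Φ b)).2.2
  rw [qE, qE, iE_mul_g, toAdd_phi_mul]
  show ((cb (iE b)).2.2 - ((Multiplicative.toAdd (Φ b)).2.2 + (-6))) / 6 = _
  rw [iE] at *
  omega

lemma dE_mul_g (b : BCCGroup) : dE (b * gE) = dE b := by
  rw [dE, dE, iE_mul_g, qE_mul_g, toAdd_phi_mul]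
  show ((Multiplicative.toAdd (Φ b)).1 + 2 - _ - _, (Multiplicative.toAdd (Φ b)).2.1 + 0 - _) = _
  refine Prod.ext ?_ ?_
  · dsimp only; ring
  · dsimp only; ring

lemma ddE_mul_g (b : BCCGroup) : ddE (b * gE) = ddE b := by
  exact Subtype.ext (congrArg χ (dE_mul_g b))

lemma iE_d_mul {d : BCCGroup} (hd : d ∈ BCCd) (j : Fin 6) : iE (d * bg j) = j := by
  have h3 := mem_d_third hd
  rw [iE, toAdd_phi_mul, phi_bg]
  show idx ((Multiplicative.toAdd (Φ d)).2.2 + (cb j).2.2) = j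
  rw [h3, zero_add]
  fin_cases j <;> decide

lemma qE_d_mul {d : BCCGroup} (hd : d ∈ BCCd) (j : Fin 6) : qE (d * bg j) = 0 := by
  have h3 := mem_d_third hd
  rw [qE, iE_d_mul hd, toAdd_phi_mul, phi_bg]
  show ((cb j).2.2 - ((Multiplicative.toAdd (Φ d)).2.2 + (cb j).2.2)) / 6 = 0
  rw [h3]; simp

lemma ddE_d_mul {d : BCCGroup} (hd : d ∈ BCCd) (j : Fin 6) :
    ddE (d * bg j) = ⟨d, hd⟩ := by
  have h3 := mem_d_third hd
  refine Subtype.ext ?_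
  show χ (dE (d * bg j)) = d
  have hdE : dE (d * bg j) =
      ((Multiplicative.toAdd (Φ d)).1, (Multiplicative.toAdd (Φ d)).2.1) := by
    rw [dE, iE_d_mul hd, qE_d_mul hd, toAdd_phi_mul, phi_bg]
    show ((Multiplicative.toAdd (Φ d)).1 + (cb j).1 - (cb j).1 - 2 * 0,
      (Multiplicative.toAdd (Φ d)).2.1 + (cb j).2.1 - (cb j).2.1) = _
    refine Prod.ext (by ring) (by ring)
  rw [hdE]
  exact χ_eq_self hd

/-! ### the algebra level -/

abbrev Ig : Ideal (MonoidAlgebra ℂ BCCGroup) :=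
  Ideal.span {(MonoidAlgebra.of ℂ BCCGroup) (bccGen 0 * bccGen 1 * bccGen 2) - 1}

abbrev mkI : MonoidAlgebra ℂ BCCGroup →+* (MonoidAlgebra ℂ BCCGroup ⧸ Ig) :=
  Ideal.Quotient.mk Ig

def ψ : MonoidAlgebra ℂ BCCGroup →ₗ[ℂ] (Fin 6 → MonoidAlgebra ℂ BCCd) :=
  (Finsupp.lsum ℂ fun b =>
    (LinearMap.single ℂ (fun _ : Fin 6 => MonoidAlgebra ℂ BCCd) (iE b)).comp
      ((MonoidAlgebra.coeffLinearEquiv ℂ).symm.toLinearMap ∘ₗ Finsupp.lsingle (ddE b)))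
    ∘ₗ (MonoidAlgebra.coeffLinearEquiv ℂ).toLinearMap

lemma ψ_single (b : BCCGroup) (c : ℂ) :
    ψ (MonoidAlgebra.single b c) = Pi.single (iE b) (MonoidAlgebra.single (ddE b) c) := by
  simp [ψ, Pi.single]

lemma mk_single_g (b : BCCGroup) (c : ℂ) :
    mkI (MonoidAlgebra.single (b * gE) c) = mkI (MonoidAlgebra.single b c) := by
  rw [Ideal.Quotient.eq]
  have h : (MonoidAlgebra.single (b * gE) c : MonoidAlgebra ℂ BCCGroup)
      - MonoidAlgebra.single b c
      = MonoidAlgebra.single b c * ((MonoidAlgebra.of ℂ BCCGroup) gE - 1) := by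
    rw [mul_sub, mul_one, MonoidAlgebra.of_apply, MonoidAlgebra.single_mul_single, mul_one]
  rw [h]
  exact Ideal.mul_mem_left _ _ (Ideal.subset_span rfl)

lemma mk_single_gz (b : BCCGroup) (t : ℤ) (c : ℂ) :
    mkI (MonoidAlgebra.single (b * gE ^ t) c) = mkI (MonoidAlgebra.single b c) := by
  induction t using Int.induction_on with
  | zero => rw [zpow_zero, mul_one]
  | succ n ih =>
      have h : b * gE ^ ((n : ℤ) + 1) = b * gE ^ (n : ℤ) * gE := by
        rw [zpow_add_one, mul_assoc]
      rw [h, mk_single_g, ih]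
  | pred n ih =>
      have h := mk_single_g (b * gE ^ (-(n : ℤ) - 1)) c
      have h2 : b * gE ^ (-(n : ℤ) - 1) * gE = b * gE ^ (-(n : ℤ)) := by
        rw [mul_assoc, ← zpow_add_one]
        norm_num
      rw [h2] at h
      rw [← h, ih]

lemma psi_mul_g (a : MonoidAlgebra ℂ BCCGroup) :
    ψ (a * (MonoidAlgebra.of ℂ BCCGroup) gE) = ψ a := by
  induction a using MonoidAlgebra.induction_linear with
  | zero => rw [zero_mul]
  | add f g hf hg => rw [add_mul, map_add, map_add, hf, hg]
  | single b c =>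
      have h : (MonoidAlgebra.single b c : MonoidAlgebra ℂ BCCGroup)
          * (MonoidAlgebra.of ℂ BCCGroup) gE = MonoidAlgebra.single (b * gE) c := by
        rw [MonoidAlgebra.of_apply, MonoidAlgebra.single_mul_single, mul_one]
      rw [h, ψ_single, ψ_single, iE_mul_g, ddE_mul_g]

lemma psi_ideal {x : MonoidAlgebra ℂ BCCGroup} (hx : x ∈ Ig) : ψ x = 0 := by
  obtain ⟨a, ha⟩ := Ideal.mem_span_singleton'.mp hx
  have ha' : a * ((MonoidAlgebra.of ℂ BCCGroup) gE - 1) = x := ha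
  rw [← ha', mul_sub, mul_one, map_sub, psi_mul_g, sub_self]

lemma mapDomainRingHom_eq (x : MonoidAlgebra ℂ BCCd) :
    (MonoidAlgebra.mapDomainRingHom ℂ BCCd.subtype) x
      = MonoidAlgebra.mapDomain (BCCd.subtype) x := rfl

def T (f : Fin 6 → MonoidAlgebra ℂ BCCd) : MonoidAlgebra ℂ BCCGroup :=
  ∑ i, (MonoidAlgebra.mapDomainRingHom ℂ BCCd.subtype) (f i)
    * (MonoidAlgebra.of ℂ BCCGroup) (bg i)

lemma T_add (u v : Fin 6 → MonoidAlgebra ℂ BCCd) : T (u + v) = T u + T v := by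
  rw [T, T, T, ← Finset.sum_add_distrib]
  refine Finset.sum_congr rfl fun i _ => ?_
  rw [Pi.add_apply, map_add, add_mul]

lemma T_pi_single (i₀ : Fin 6) (x : MonoidAlgebra ℂ BCCd) :
    T (Pi.single i₀ x) = (MonoidAlgebra.mapDomainRingHom ℂ BCCd.subtype) x
      * (MonoidAlgebra.of ℂ BCCGroup) (bg i₀) := by
  rw [T, Finset.sum_eq_single i₀]
  · rw [Pi.single_eq_same]
  · intro j _ hj
    rw [Pi.single_eq_of_ne hj, map_zero, zero_mul]
  · intro h; exact absurd (Finset.mem_univ i₀) h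

lemma psi_T (f : Fin 6 → MonoidAlgebra ℂ BCCd) : ψ (T f) = f := by
  have key : ∀ (i : Fin 6) (x : MonoidAlgebra ℂ BCCd),
      ψ ((MonoidAlgebra.mapDomainRingHom ℂ BCCd.subtype) x
        * (MonoidAlgebra.of ℂ BCCGroup) (bg i)) = Pi.single i x := by
    intro i x
    induction x using MonoidAlgebra.induction_linear with
    | zero => rw [map_zero, zero_mul, map_zero, Pi.single_zero]
    | add p q hp hq => rw [map_add, add_mul, map_add, hp, hq, Pi.single_add]
    | single d c =>
        rw [mapDomainRingHom_eq, MonoidAlgebra.mapDomain_single]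
        have h : (MonoidAlgebra.single (BCCd.subtype d) c : MonoidAlgebra ℂ BCCGroup)
            * (MonoidAlgebra.of ℂ BCCGroup) (bg i)
            = MonoidAlgebra.single ((d : BCCGroup) * bg i) c := by
          rw [MonoidAlgebra.of_apply, MonoidAlgebra.single_mul_single, mul_one]
          rfl
        rw [h, ψ_single, iE_d_mul d.2 i, ddE_d_mul d.2 i]
  rw [T, map_sum]
  calc (∑ i, ψ ((MonoidAlgebra.mapDomainRingHom ℂ BCCd.subtype) (f i)
        * (MonoidAlgebra.of ℂ BCCGroup) (bg i)))
      = ∑ i, Pi.single i (f i) := Finset.sum_congr rfl fun i _ => key i (f i)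
    _ = f := Finset.univ_sum_single f

lemma T_psi (a : MonoidAlgebra ℂ BCCGroup) : mkI (T (ψ a)) = mkI a := by
  induction a using MonoidAlgebra.induction_linear with
  | zero => rw [map_zero]; norm_num [T]
  | add f g hf hg => rw [map_add, T_add, RingHom.map_add, hf, hg, RingHom.map_add]
  | single b c =>
      rw [ψ_single, T_pi_single, mapDomainRingHom_eq,
        MonoidAlgebra.mapDomain_single]
      have h : (MonoidAlgebra.single (BCCd.subtype (ddE b)) c
            : MonoidAlgebra ℂ BCCGroup)
          * (MonoidAlgebra.of ℂ BCCGroup) (bg (iE b))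
          = MonoidAlgebra.single (b * gE ^ (-qE b)) c := by
        rw [MonoidAlgebra.of_apply, MonoidAlgebra.single_mul_single, mul_one]
        congr 1
        show χ (dE b) * bg (iE b) = b * gE ^ (-qE b)
        have hb := decomp b
        calc χ (dE b) * bg (iE b)
            = χ (dE b) * gE ^ qE b * bg (iE b) * gE ^ (-qE b) := by
              rw [mul_right_comm (χ (dE b)) (gE ^ qE b) (bg (iE b)), mul_assoc, ← zpow_add]
              norm_num
          _ = b * gE ^ (-qE b) := by rw [← hb]
      rw [h, mk_single_gz]


lemma bccBasis_eq (i : Fin 6) :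
    bccBasis i = Ideal.Quotient.mk _ ((MonoidAlgebra.of ℂ BCCGroup) (bg i)) := by
  fin_cases i <;> rfl

set_option synthInstance.maxHeartbeats 1000000 in
lemma F_eq (f : Fin 6 → MonoidAlgebra ℂ BCCd) :
    (∑ i, φBCC (f i) * bccBasis i : RBCC) = mkI (T f) := by
  rw [T, map_sum]
  refine Finset.sum_congr rfl fun i _ => ?_
  calc φBCC (f i) * bccBasis i
      = mkI ((MonoidAlgebra.mapDomainRingHom ℂ BCCd.subtype) (f i)
          * (MonoidAlgebra.of ℂ BCCGroup) (bg i)) := by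
        rw [bccBasis_eq, RingHom.map_mul]; rfl

end BCCProof

open BCCProof in
/-- ℂ[B]/(α₁α₂α₃ − 1) is a free ℂ[B_d]-module of rank 6 with basis
1, α₁, α₁α₂, β, α₁β, α₁α₂β: the explicit ℂ[B_d]-linear map is bijective. -/
theorem BCC_module_decomposition :
    Function.Bijective
      (fun f : Fin 6 → MonoidAlgebra ℂ BCCd =>
        (∑ i : Fin 6, φBCC (f i) * bccBasis i : RBCC)) := by
  constructor
  · intro f1 f2 h
    dsimp only at h
    rw [F_eq, F_eq] at h
    have hmem : T f1 - T f2 ∈ Ig := (Ideal.Quotient.eq).mp h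
    have h0 := psi_ideal hmem
    rw [map_sub, psi_T, psi_T, sub_eq_zero] at h0
    exact h0
  · intro x
    obtain ⟨a, rfl⟩ := Ideal.Quotient.mk_surjective x
    exact ⟨ψ a, by dsimp only; rw [F_eq, T_psi]⟩


end
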